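/- Let f be a fractional perfect matching of G. Then there exists a fractional perfect matching f' of G with E(f') ⊆ E(f), equivalent to f, such that every connected component of the subgraph G(E(f')) (after deleting isolated vertices) is either a single edge or an odd cycle. -/

import Mathlib

open Finset SimpleGraph
open scoped Classical
set_option linter.unusedSectionVars false
set_option maxHeartbeats 1000000

variable {V : Type*} [Fintype V] [DecidableEq V]

/-- The sum of `f` over the edges (elements of `Sym2 V`) containing the vertex `v`. -/
noncomputable def fracDeg (f : Sym2 V → ℝ) (v : V) : ℝ :=
  ∑ e ∈ Finset.univ.filter (fun e : Sym2 V => v ∈ e), f e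

/-- `f` is a fractional matching of `G`. -/
def IsFracMatching (G : SimpleGraph V) (f : Sym2 V → ℝ) : Prop :=
  (∀ e, 0 ≤ f e ∧ f e ≤ 1) ∧ (∀ e, e ∉ G.edgeSet → f e = 0) ∧ ∀ v, fracDeg f v ≤ 1

/-- `f` is a fractional perfect matching of `G`. -/
def IsFPM (G : SimpleGraph V) (f : Sym2 V → ℝ) : Prop :=
  (∀ e, 0 ≤ f e ∧ f e ≤ 1) ∧ (∀ e, e ∉ G.edgeSet → f e = 0) ∧ ∀ v, fracDeg f v = 1

/-- `E(f)`: the set of edges with positive weight. -/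
noncomputable def fSupp (f : Sym2 V → ℝ) : Finset (Sym2 V) :=
  Finset.univ.filter (fun e => 0 < f e)

/-- Number of edges of `F` containing `v` (the degree of `v` in the subgraph with edge set `F`). -/
noncomputable def edgeDeg (F : Finset (Sym2 V)) (v : V) : ℕ :=
  (F.filter (fun e => v ∈ e)).card

/-- The set of vertices incident to some edge of `F`. -/
noncomputable def vertSet (F : Finset (Sym2 V)) : Finset V :=
  Finset.univ.filter (fun v => ∃ e ∈ F, v ∈ e)

/-- Two edge-weight functions are equivalent: same incident sums at every vertex. -/
def Equiv' (f f' : Sym2 V → ℝ) : Prop := ∀ v : V, fracDeg f v = fracDeg f' v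

/-- `F` consists of a single edge. -/
def IsSingleEdge (F : Finset (Sym2 V)) : Prop := ∃ e : Sym2 V, F = {e}

/-- `F` is the edge set of an odd cycle. -/
def IsOddCycleSet (F : Finset (Sym2 V)) : Prop :=
  ∃ (v : V) (c : (SimpleGraph.fromEdgeSet (↑F : Set (Sym2 V))).Walk v v),
    c.IsCycle ∧ Odd c.length ∧ c.edges.toFinset = F

/-- Two edge sets are vertex-disjoint. -/
def VDisj (F F' : Finset (Sym2 V)) : Prop :=
  ∀ v : V, (∃ e ∈ F, v ∈ e) → ¬ ∃ e ∈ F', v ∈ e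

/-- Every connected component of the subgraph with edge set `F` (ignoring isolated
vertices) is either a single edge or an odd cycle, expressed via a partition of `F`
into pairwise vertex-disjoint such pieces. -/
def EdgesAndOddCycles (F : Finset (Sym2 V)) : Prop :=
  ∃ P : Finset (Finset (Sym2 V)),
    (∀ A ∈ P, IsSingleEdge A ∨ IsOddCycleSet A) ∧
    (∀ A ∈ P, ∀ B ∈ P, A ≠ B → VDisj A B) ∧
    P.biUnion id = F

/-- The family `P` witnesses that `f` is a `δ`-Partitionable fractional perfect matching. -/
def IsPartitionWitness (f : Sym2 V → ℝ) (δ : ℕ) (P : Fin δ → Finset (Sym2 V)) : Prop :=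
  (∀ j, (P j).Nonempty) ∧
  (∀ j k, j ≠ k → VDisj (P j) (P k)) ∧
  (∀ j, P j ⊆ fSupp f) ∧
  (∀ e ∈ fSupp f, ∃ j, e ∈ P j) ∧
  ∀ j, ∑ e ∈ P j, f e = (Fintype.card V : ℝ) / (2 * δ)

/-- `f` is `δ`-Partitionable. -/
def IsDeltaPartitionable (f : Sym2 V → ℝ) (δ : ℕ) : Prop :=
  ∃ P : Fin δ → Finset (Sym2 V), IsPartitionWitness f δ P

lemma mem_fSupp {f : Sym2 V → ℝ} {e : Sym2 V} : e ∈ fSupp f ↔ 0 < f e := by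
  simp [fSupp]

lemma fracDeg_add_smul (h g : Sym2 V → ℝ) (t : ℝ) (v : V) :
    fracDeg (fun e => h e + t * g e) v = fracDeg h v + t * fracDeg g v := by
  simp [fracDeg, Finset.sum_add_distrib, Finset.mul_sum]

/-- restrict the sum to a finset outside which the function vanishes -/
lemma fracDeg_eq_sum_filter {h : Sym2 V → ℝ} {A : Finset (Sym2 V)}
    (h0 : ∀ e ∉ A, h e = 0) (v : V) :
    fracDeg h v = ∑ e ∈ A.filter (fun e => v ∈ e), h e := by
  rw [fracDeg]
  refine (Finset.sum_subset ?_ ?_).symm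
  · exact Finset.filter_subset_filter _ (Finset.subset_univ A)
  · intro e he hne
    simp only [Finset.mem_filter, Finset.mem_univ, true_and] at he hne
    exact h0 e (fun hA => hne ⟨hA, he⟩)

/-- In an FPM, an edge of weight one kills all other edges at its endpoints. -/
lemma weight_one_isolates {G : SimpleGraph V} {h : Sym2 V → ℝ} (hh : IsFPM G h)
    {e : Sym2 V} (he : h e = 1) {v : V} (hv : v ∈ e) :
    ∀ e', e' ≠ e → v ∈ e' → h e' = 0 := by
  intro e' hne hv'
  have hm : e ∈ Finset.univ.filter (fun e : Sym2 V => v ∈ e) := by simp [hv]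
  have hsum : fracDeg h v = 1 := hh.2.2 v
  rw [fracDeg, ← Finset.add_sum_erase _ _ hm, he] at hsum
  have hz : ∑ x ∈ (Finset.univ.filter (fun e : Sym2 V => v ∈ e)).erase e, h x = 0 := by
    linarith
  have := (Finset.sum_eq_zero_iff_of_nonneg (fun x _ => (hh.1 x).1)).mp hz
  exact this e' (by simp [hne, hv'])

lemma weight_one_of_supp {G : SimpleGraph V} {h : Sym2 V → ℝ} (hh : IsFPM G h)
    {g : Sym2 V → ℝ} (hg0 : ∀ e ∉ fSupp h, g e = 0) (hgd : ∀ v, fracDeg g v = 0)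
    {e : Sym2 V} (he : h e = 1) : g e = 0 := by
  -- take an endpoint of e
  have heG : e ∈ G.edgeSet := by
    by_contra hc
    have := hh.2.1 e hc
    rw [this] at he; norm_num at he
  induction e using Sym2.ind with
  | _ a b =>
    have hva : a ∈ s(a, b) := Sym2.mem_mk_left a b
    have hsum : fracDeg g a = 0 := hgd a
    rw [fracDeg] at hsum
    have hm : s(a,b) ∈ Finset.univ.filter (fun e : Sym2 V => a ∈ e) := by simp
    rw [← Finset.add_sum_erase _ _ hm] at hsum
    have hz : ∀ x ∈ (Finset.univ.filter (fun e : Sym2 V => a ∈ e)).erase s(a,b), g x = 0 := by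
      intro x hx
      simp only [Finset.mem_erase, Finset.mem_filter, Finset.mem_univ, true_and] at hx
      refine hg0 x ?_
      rw [mem_fSupp]
      have := weight_one_isolates hh he hva x hx.1 hx.2
      simp [this]
    rw [Finset.sum_eq_zero hz] at hsum
    linarith

/-- main shrinking step, assuming `g` has a negative entry. -/
lemma shrink_aux {G : SimpleGraph V} {h : Sym2 V → ℝ} (hh : IsFPM G h)
    {g : Sym2 V → ℝ} (hg0 : ∀ e ∉ fSupp h, g e = 0) (hgd : ∀ v, fracDeg g v = 0)
    {e₁ : Sym2 V} (hneg : g e₁ < 0) :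
    ∃ h', IsFPM G h' ∧ Equiv' h h' ∧ fSupp h' ⊂ fSupp h := by
  classical
  set F := fSupp h with hF
  set C : Finset (Sym2 V) := F.filter (fun e => g e ≠ 0) with hC
  have he₁F : e₁ ∈ F := by
    by_contra hc; rw [hg0 e₁ hc] at hneg; norm_num at hneg
  have he₁C : e₁ ∈ C := by simp [hC, he₁F, ne_of_lt hneg]
  set bound : Sym2 V → ℝ := fun e => if g e < 0 then h e / (-g e) else (1 - h e) / (g e)
    with hbound
  have hlt1 : ∀ e ∈ C, 0 < g e → h e < 1 := by
    intro e heC hpos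
    rcases lt_or_eq_of_le (hh.1 e).2 with h1 | h1
    · exact h1
    · exact absurd (weight_one_of_supp hh hg0 hgd h1) (ne_of_gt hpos)
  have hbpos : ∀ e ∈ C, 0 < bound e := by
    intro e heC
    have heF : e ∈ F := (Finset.mem_filter.mp heC).1
    have hgne : g e ≠ 0 := (Finset.mem_filter.mp heC).2
    have hhe : 0 < h e := mem_fSupp.mp heF
    by_cases hlt : g e < 0
    · simp only [hbound, if_pos hlt]
      exact div_pos hhe (by linarith)
    · have hgt : 0 < g e := lt_of_le_of_ne (not_lt.mp hlt) (Ne.symm hgne)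
      simp only [hbound, if_neg hlt]
      exact div_pos (by linarith [hlt1 e heC hgt]) hgt
  obtain ⟨estar, hestar, hminstar⟩ := C.exists_min_image bound ⟨e₁, he₁C⟩
  set t := bound estar with ht
  have htpos : 0 < t := hbpos estar hestar
  set h' : Sym2 V → ℝ := fun e => h e + t * g e with hh'
  -- key pointwise bounds
  have hub : ∀ e, h' e ≤ 1 := by
    intro e
    by_cases hgz : g e = 0
    · simp [hh', hgz]; exact (hh.1 e).2
    · have heF : e ∈ F := by by_contra hc; exact hgz (hg0 e hc)
      have heC : e ∈ C := by simp [hC, heF, hgz]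
      by_cases hlt : g e < 0
      · have : t * g e < 0 := mul_neg_of_pos_of_neg htpos hlt
        simp only [hh']
        nlinarith [(hh.1 e).2]
      · have hgt : 0 < g e := lt_of_le_of_ne (not_lt.mp hlt) (Ne.symm hgz)
        have hb : t ≤ bound e := hminstar e heC
        have : bound e = (1 - h e) / g e := by simp [hbound, hlt]
        have h2 : t * g e ≤ 1 - h e := by
          rw [this] at hb
          calc t * g e ≤ ((1 - h e) / g e) * g e := by nlinarith
            _ = 1 - h e := by field_simp
        simp only [hh']; linarith
  have hlb : ∀ e, 0 ≤ h' e := by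
    intro e
    by_cases hgz : g e = 0
    · simp [hh', hgz]; exact (hh.1 e).1
    · have heF : e ∈ F := by by_contra hc; exact hgz (hg0 e hc)
      have heC : e ∈ C := by simp [hC, heF, hgz]
      have hhe : 0 < h e := mem_fSupp.mp heF
      by_cases hlt : g e < 0
      · have hb : t ≤ bound e := hminstar e heC
        have hbe : bound e = h e / (-g e) := by simp [hbound, hlt]
        have h2 : -(t * g e) ≤ h e := by
          rw [hbe] at hb
          calc -(t * g e) = t * (-g e) := by ring
            _ ≤ (h e / (-g e)) * (-g e) := by nlinarith
            _ = h e := by field_simp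
        simp only [hh']; linarith
      · have hgt : 0 < g e := lt_of_le_of_ne (not_lt.mp hlt) (Ne.symm hgz)
        simp only [hh']; nlinarith
  have hzero : ∀ e, e ∉ F → h' e = 0 := by
    intro e he
    have h1 : h e = 0 := by
      have := mem_fSupp.not.mp he
      push_neg at this
      linarith [(hh.1 e).1, this]
    simp [hh', h1, hg0 e he]
  have hFPM : IsFPM G h' := by
    refine ⟨fun e => ⟨hlb e, hub e⟩, fun e he => ?_, fun v => ?_⟩
    · refine hzero e ?_
      rw [mem_fSupp.not]
      simp [hh.2.1 e he]
    · rw [hh', fracDeg_add_smul, hgd v, hh.2.2 v]; ring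
  have hsub : fSupp h' ⊆ F := by
    intro e he
    by_contra hc
    rw [mem_fSupp, hzero e hc] at he
    norm_num at he
  have hequiv : Equiv' h h' := by
    intro v; rw [hh', fracDeg_add_smul, hgd v]; ring
  -- strictness
  have hgstar : g estar ≠ 0 := (Finset.mem_filter.mp hestar).2
  have hestarF : estar ∈ F := (Finset.mem_filter.mp hestar).1
  have : ∃ w ∈ F, w ∉ fSupp h' := by
    by_cases hlt : g estar < 0
    · refine ⟨estar, hestarF, ?_⟩
      have hbe : bound estar = h estar / (-g estar) := by simp [hbound, hlt]
      have : h' estar = 0 := by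
        simp only [hh', ht, hbe]
        have hgne' : -g estar ≠ 0 := by intro hc; apply hgstar; linarith
        field_simp; ring
      rw [mem_fSupp, this]; norm_num
    · have hgt : 0 < g estar := lt_of_le_of_ne (not_lt.mp hlt) (Ne.symm hgstar)
      have hbe : bound estar = (1 - h estar) / g estar := by simp [hbound, hlt]
      have hone : h' estar = 1 := by
        simp only [hh', ht, hbe]
        field_simp; ring
      -- find another positive edge at an endpoint of estar
      have heG : estar ∈ G.edgeSet := by
        by_contra hc
        have := hh.2.1 estar hc
        have := mem_fSupp.mp hestarF
        linarith
      have hhlt1 : h estar < 1 := hlt1 estar hestar hgt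
      -- pick a vertex in estar
      obtain ⟨a, ha⟩ : ∃ a, a ∈ estar := by
        induction estar using Sym2.ind with
        | _ x y => exact ⟨x, Sym2.mem_mk_left x y⟩
      have hm : estar ∈ Finset.univ.filter (fun e : Sym2 V => a ∈ e) := by simp [ha]
      have hdeg : fracDeg h a = 1 := hh.2.2 a
      rw [fracDeg, ← Finset.add_sum_erase _ _ hm] at hdeg
      have hpos : 0 < ∑ x ∈ (Finset.univ.filter (fun e : Sym2 V => a ∈ e)).erase estar, h x := by
        linarith
      obtain ⟨e', he'mem, he'pos⟩ : ∃ e' ∈ (Finset.univ.filter (fun e : Sym2 V => a ∈ e)).erase estar, 0 < h e' := by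
        by_contra hc
        push_neg at hc
        have : ∑ x ∈ (Finset.univ.filter (fun e : Sym2 V => a ∈ e)).erase estar, h x ≤ 0 :=
          Finset.sum_nonpos hc
        linarith
      refine ⟨e', mem_fSupp.mpr he'pos, ?_⟩
      have he'ne : e' ≠ estar := (Finset.mem_erase.mp he'mem).1
      have hae' : a ∈ e' := by
        have := (Finset.mem_erase.mp he'mem).2
        simpa using this
      have := weight_one_isolates hFPM hone ha e' he'ne hae'
      rw [mem_fSupp, this]; norm_num
  obtain ⟨w, hwF, hw⟩ := this
  exact ⟨h', hFPM, hequiv, Finset.ssubset_iff_of_subset hsub |>.mpr ⟨w, hwF, hw⟩⟩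

lemma shrink {G : SimpleGraph V} {h : Sym2 V → ℝ} (hh : IsFPM G h)
    {g : Sym2 V → ℝ} (hg0 : ∀ e ∉ fSupp h, g e = 0) (hgd : ∀ v, fracDeg g v = 0)
    (hgne : g ≠ 0) :
    ∃ h', IsFPM G h' ∧ Equiv' h h' ∧ fSupp h' ⊂ fSupp h := by
  obtain ⟨e₀, he₀⟩ : ∃ e₀, g e₀ ≠ 0 := by
    by_contra hc; push_neg at hc; exact hgne (funext hc)
  rcases lt_or_gt_of_ne he₀ with hlt | hgt
  · exact shrink_aux hh hg0 hgd hlt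
  · refine shrink_aux (g := fun e => -g e) hh (fun e he => by simp [hg0 e he])
      (fun v => ?_) (e₁ := e₀) (by simpa using hgt)
    have := fracDeg_add_smul (fun _ => (0:ℝ)) g (-1) v
    simp only [zero_add, neg_one_mul] at this
    rw [this, hgd v]
    simp [fracDeg]

/-- the minimal equivalent FPM: kernel property -/
lemma exists_minimal {G : SimpleGraph V} {f : Sym2 V → ℝ} (hf : IsFPM G f) :
    ∃ h, IsFPM G h ∧ fSupp h ⊆ fSupp f ∧ Equiv' f h ∧
      ∀ g : Sym2 V → ℝ, (∀ e ∉ fSupp h, g e = 0) → (∀ v, fracDeg g v = 0) → g = 0 := by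
  classical
  set T : Finset (Finset (Sym2 V)) :=
    Finset.univ.filter (fun F => ∃ h, IsFPM G h ∧ fSupp h ⊆ fSupp f ∧ Equiv' f h ∧ fSupp h = F)
    with hT
  have hne : T.Nonempty := ⟨fSupp f, by simp [hT]; exact ⟨f, hf, le_refl _, fun v => rfl, rfl⟩⟩
  obtain ⟨F₀, hF₀T, hmin⟩ := T.exists_min_image Finset.card hne
  simp only [hT, Finset.mem_filter, Finset.mem_univ, true_and] at hF₀T
  obtain ⟨h, hh, hsub, hequiv, hFsupp⟩ := hF₀T
  refine ⟨h, hh, hsub, hequiv, fun g hg0 hgd => ?_⟩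
  by_contra hgne
  obtain ⟨h', hh', hequiv', hss⟩ := shrink hh hg0 hgd hgne
  have hmem : fSupp h' ∈ T := by
    simp only [hT, Finset.mem_filter, Finset.mem_univ, true_and]
    exact ⟨h', hh', (hss.subset.trans (hFsupp ▸ hsub)), fun v => (hequiv v).trans (hequiv' v), rfl⟩
  have := hmin _ hmem
  rw [hFsupp] at hss
  exact absurd (Finset.card_lt_card hss) (not_lt.mpr this)

section LA

variable {A : Finset (Sym2 V)}

/-- the incidence linear map of an edge finset -/
noncomputable def incMap (A : Finset (Sym2 V)) :
    ({e // e ∈ A} → ℝ) →ₗ[ℝ] ({v // v ∈ vertSet A} → ℝ) where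
  toFun g := fun v => ∑ e : {e // e ∈ A}, if (v : V) ∈ (e : Sym2 V) then g e else 0
  map_add' g1 g2 := by
    funext v
    simp only [Pi.add_apply]
    rw [← Finset.sum_add_distrib]
    congr 1; funext e
    by_cases hv : (v : V) ∈ (e : Sym2 V) <;> simp [hv]
  map_smul' c g := by
    funext v
    simp only [Pi.smul_apply, RingHom.id_apply, smul_eq_mul, Finset.mul_sum]
    congr 1; funext e
    by_cases hv : (v : V) ∈ (e : Sym2 V) <;> simp [hv]

lemma incMap_injective
    (hker : ∀ g : Sym2 V → ℝ, (∀ e ∉ A, g e = 0) → (∀ v, fracDeg g v = 0) → g = 0) :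
    Function.Injective (incMap A) := by
  rw [injective_iff_map_eq_zero]
  intro g hg
  set G' : Sym2 V → ℝ := fun e => if h : e ∈ A then g ⟨e, h⟩ else 0 with hG'
  have h0 : ∀ e ∉ A, G' e = 0 := fun e he => by simp [hG', he]
  have hdeg : ∀ v, fracDeg G' v = 0 := by
    intro v
    by_cases hv : v ∈ vertSet A
    · have hzero := congrFun hg ⟨v, hv⟩
      simp only [Pi.zero_apply] at hzero
      calc fracDeg G' v = ∑ e ∈ A, (if v ∈ e then G' e else 0) := by
            rw [fracDeg_eq_sum_filter h0 v, Finset.sum_filter]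
        _ = ∑ e : {e // e ∈ A}, (if v ∈ (e : Sym2 V) then G' (e : Sym2 V) else 0) :=
            (Finset.sum_coe_sort A _).symm
        _ = incMap A g ⟨v, hv⟩ := by
            refine Finset.sum_congr rfl fun e _ => ?_
            by_cases hv' : v ∈ (e : Sym2 V) <;> simp [hv', hG', e.2]
        _ = 0 := hzero
    · rw [fracDeg]
      refine Finset.sum_eq_zero fun e he => ?_
      simp only [Finset.mem_filter, Finset.mem_univ, true_and] at he
      refine h0 e fun heA => ?_
      exact hv (by simp [vertSet]; exact ⟨e, heA, he⟩)
  have := hker G' h0 hdeg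
  funext e
  have := congrFun this (e : Sym2 V)
  simpa [hG', e.2] using this

lemma card_le_of_ker
    (hker : ∀ g : Sym2 V → ℝ, (∀ e ∉ A, g e = 0) → (∀ v, fracDeg g v = 0) → g = 0) :
    A.card ≤ (vertSet A).card := by
  have h := LinearMap.finrank_le_finrank_of_injective (incMap_injective hker)
  simpa [Module.finrank_pi] using h

/-- refined bound with a "bipartite" weighting σ -/
lemma card_lt_of_ker_of_sigma
    (hker : ∀ g : Sym2 V → ℝ, (∀ e ∉ A, g e = 0) → (∀ v, fracDeg g v = 0) → g = 0)
    (σ : V → ℝ) (hσe : ∀ e ∈ A, ∑ v ∈ (vertSet A).filter (· ∈ e), σ v = 0)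
    (hσne : ∃ v ∈ vertSet A, σ v ≠ 0) :
    A.card < (vertSet A).card := by
  classical
  set S := vertSet A with hS
  set φ : ({v // v ∈ S} → ℝ) →ₗ[ℝ] ℝ :=
    { toFun := fun h => ∑ v : {v // v ∈ S}, σ v * h v
      map_add' := by intro a b; simp only [Pi.add_apply, mul_add, Finset.sum_add_distrib]
      map_smul' := by
        intro c a
        simp only [Pi.smul_apply, smul_eq_mul, RingHom.id_apply, Finset.mul_sum]
        congr 1; funext v; ring } with hφ
  have hφne : φ ≠ 0 := by
    obtain ⟨v, hvS, hv⟩ := hσne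
    intro hc
    have := congrFun (congrArg DFunLike.coe hc) (fun w => if w = ⟨v, hvS⟩ then 1 else 0)
    simp only [hφ, LinearMap.coe_mk, AddHom.coe_mk, LinearMap.zero_apply] at this
    change ∑ w : {v // v ∈ S}, σ w * (if w = ⟨v, hvS⟩ then (1:ℝ) else 0) = 0 at this
    rw [Finset.sum_eq_single (⟨v, hvS⟩ : {v // v ∈ S})] at this
    · simp at this; exact hv this
    · intro b _ hb; simp [hb]
    · intro hb; simp at hb
  have hrange : LinearMap.range (incMap A) ≤ LinearMap.ker φ := by
    rintro _ ⟨g, rfl⟩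
    simp only [LinearMap.mem_ker, hφ, LinearMap.coe_mk, AddHom.coe_mk]
    show ∑ v : {v // v ∈ S}, σ v * (∑ e : {e // e ∈ A}, if (v : V) ∈ (e : Sym2 V) then g e else 0) = 0
    simp only [Finset.mul_sum]
    have hswap : (∑ v : {v // v ∈ S}, ∑ e : {e // e ∈ A}, σ (v : V) * (if (v : V) ∈ (e : Sym2 V) then g e else 0))
        = ∑ e : {e // e ∈ A}, ∑ v : {v // v ∈ S}, σ (v : V) * (if (v : V) ∈ (e : Sym2 V) then g e else 0) :=
      Finset.sum_comm
    rw [hswap]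
    refine Finset.sum_eq_zero fun e _ => ?_
    have : ∀ v : {v // v ∈ S}, σ v * (if (v : V) ∈ (e : Sym2 V) then g e else 0)
        = (if (v : V) ∈ (e : Sym2 V) then σ (v : V) else 0) * g e := by
      intro v; by_cases hv : (v : V) ∈ (e : Sym2 V) <;> simp [hv]
    have hcongr : (∑ v : {v // v ∈ S}, σ (v : V) * (if (v : V) ∈ (e : Sym2 V) then g e else 0))
        = ∑ v : {v // v ∈ S}, (if (v : V) ∈ (e : Sym2 V) then σ (v : V) else 0) * g e :=
      Finset.sum_congr rfl fun v _ => this v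
    rw [hcongr, ← Finset.sum_mul]
    have h2 : ∑ v : {v // v ∈ S}, (if (v : V) ∈ (e : Sym2 V) then σ (v : V) else 0)
        = ∑ v ∈ S.filter (· ∈ (e : Sym2 V)), σ v := by
      rw [Finset.sum_filter]
      exact Finset.sum_coe_sort S (fun v => if v ∈ (e : Sym2 V) then σ v else 0)
    rw [h2, hσe e e.2, zero_mul]
  have hinj := incMap_injective hker
  have h1 : A.card = Module.finrank ℝ (LinearMap.range (incMap A)) := by
    rw [LinearMap.finrank_range_of_inj hinj]
    simp [Module.finrank_pi]
  have h2 : Module.finrank ℝ (LinearMap.range (incMap A)) ≤ Module.finrank ℝ (LinearMap.ker φ) :=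
    Submodule.finrank_mono hrange
  have h3 : Module.finrank ℝ (LinearMap.ker φ) < (vertSet A).card := by
    have hrn := LinearMap.finrank_range_add_finrank_ker φ
    have hpos : 0 < Module.finrank ℝ (LinearMap.range φ) := by
      rw [Module.finrank_pos_iff]
      rw [Submodule.nontrivial_iff_ne_bot, Ne, LinearMap.range_eq_bot]
      exact hφne
    have hdim : Module.finrank ℝ ({v // v ∈ S} → ℝ) = (vertSet A).card := by
      rw [Module.finrank_pi]
      rw [Fintype.card_coe]
    omega
  have h4 : #A ≤ Module.finrank ℝ (LinearMap.ker φ) := by rw [h1]; exact h2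
  exact lt_of_le_of_lt h4 h3

end LA

/-- edges of a path containing the start vertex are unique -/
lemma path_start_edge_unique {G : SimpleGraph V} {u w : V} {p : G.Walk u w} (hp : p.IsPath) :
    ∀ e1 ∈ p.edges, ∀ e2 ∈ p.edges, u ∈ e1 → u ∈ e2 → e1 = e2 := by
  cases p with
  | nil => intro e1 h1; simp at h1
  | cons hadj q =>
    rename_i x
    have hq : u ∉ q.support := by
      have := hp.2
      simp only [SimpleGraph.Walk.support_cons, List.nodup_cons] at this
      exact this.1
    have key : ∀ e ∈ (SimpleGraph.Walk.cons hadj q).edges, u ∈ e → e = s(u, x) := by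
      intro e he hu
      rw [SimpleGraph.Walk.edges_cons, List.mem_cons] at he
      rcases he with he | he
      · exact he
      · exfalso
        obtain ⟨y, rfl⟩ := Sym2.mem_iff_exists.mp hu
        exact hq (q.fst_mem_support_of_mem_edges he)
    intro e1 h1 e2 h2 hu1 hu2
    rw [key e1 h1 hu1, key e2 h2 hu2]

/-- edges of a path containing the end vertex are unique -/
lemma path_end_edge_unique {G : SimpleGraph V} {u w : V} {p : G.Walk u w} (hp : p.IsPath) :
    ∀ e1 ∈ p.edges, ∀ e2 ∈ p.edges, w ∈ e1 → w ∈ e2 → e1 = e2 := by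
  intro e1 h1 e2 h2 hw1 hw2
  refine path_start_edge_unique hp.reverse e1 ?_ e2 ?_ hw1 hw2 <;>
    simp [SimpleGraph.Walk.edges_reverse, h1, h2]

/-- every edge of a walk joins consecutive support entries -/
lemma walk_edge_eq {G : SimpleGraph V} {u w : V} (p : G.Walk u w) :
    ∀ e ∈ p.edges, ∃ i : ℕ, ∃ (h2 : i + 1 < p.support.length),
      e = s(p.support[i]'(by omega), p.support[i+1]'h2) := by
  induction p with
  | nil => intro e he; simp at he
  | cons hadj q ih =>
    rename_i a b c
    intro e he
    rw [SimpleGraph.Walk.edges_cons, List.mem_cons] at he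
    rcases he with he | he
    · refine ⟨0, ?_, ?_⟩
      · simp [SimpleGraph.Walk.support_cons, SimpleGraph.Walk.length_support]
      · subst he
        have hq0 : q.support.length > 0 := by
          rw [SimpleGraph.Walk.length_support]; omega
        have h1 : (Walk.cons hadj q).support[1]'(by simpa [SimpleGraph.Walk.support_cons] using hq0) = b := by
          show (a :: q.support)[1]'(by simpa using hq0) = b
          rw [List.getElem_cons_succ]
          rw [List.getElem_zero]
          exact SimpleGraph.Walk.head_support q
        have h0 : (Walk.cons hadj q).support[0]'(by simp [SimpleGraph.Walk.support_cons]) = a := rfl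
        rw [h0, h1]
    · obtain ⟨i, h2, heq⟩ := ih e he
      refine ⟨i + 1, ?_, ?_⟩
      · simp only [SimpleGraph.Walk.support_cons, List.length_cons]; omega
      · rw [heq]
        congr 1 <;> simp [SimpleGraph.Walk.support_cons]

lemma cycle_dropLast_nodup {G : SimpleGraph V} {v : V} {c : G.Walk v v} (hc : c.IsCycle) :
    c.support.dropLast.Nodup := by
  have hne : c.support.tail ≠ [] := by
    intro h
    have hlen := SimpleGraph.Walk.length_support c
    have h3 := hc.three_le_length
    have hs : c.support = [v] := by rw [SimpleGraph.Walk.support_eq_cons, h]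
    rw [hs] at hlen
    simp only [List.length_singleton] at hlen
    omega
  have htail : c.support.tail.Nodup := hc.2
  have hlast : c.support.tail.getLast hne = v := by
    rw [List.getLast_tail]
    exact SimpleGraph.Walk.getLast_support c
  rw [SimpleGraph.Walk.support_eq_cons]
  rw [List.dropLast_cons_of_ne_nil hne]
  rw [List.nodup_cons]
  have hsplit : c.support.tail = c.support.tail.dropLast ++ [v] := by
    conv_lhs => rw [← List.dropLast_concat_getLast hne]
    rw [hlast]
  constructor
  · intro hvmem
    have : ¬ c.support.tail.Nodup := by
      rw [hsplit]
      simp only [List.nodup_append]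
      intro hcon
      exact hcon.2.2 v hvmem v (by simp) rfl
    exact this htail
  · exact htail.sublist (List.dropLast_sublist _)

lemma cycle_indexOf {G : SimpleGraph V} {v : V} {c : G.Walk v v} (hc : c.IsCycle)
    {i : ℕ} (hi : i + 1 < c.support.length) :
    c.support.idxOf (c.support[i]'(by omega)) = i := by
  have hnd := cycle_dropLast_nodup hc
  have hlen : c.support.dropLast.length = c.support.length - 1 := by simp
  have hilt : i < c.support.dropLast.length := by omega
  have hget : c.support[i]'(by omega) = c.support.dropLast[i]'hilt := by
    rw [List.getElem_dropLast]
  rw [hget]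
  have hmem : c.support.dropLast[i]'hilt ∈ c.support.dropLast := List.getElem_mem _
  have hsplit : c.support = c.support.dropLast ++ [v] := by
    have hne : c.support ≠ [] := by rw [SimpleGraph.Walk.support_eq_cons]; simp
    conv_lhs => rw [← List.dropLast_concat_getLast hne]
    rw [SimpleGraph.Walk.getLast_support]
  have key : List.idxOf (c.support.dropLast[i]'hilt) (c.support.dropLast ++ [v]) = i := by
    rw [List.idxOf_append_of_mem hmem]
    exact hnd.idxOf_getElem i hilt
  exact (congrArg (List.idxOf (c.support.dropLast[i]'hilt)) hsplit).trans key

lemma mem_vertSet {A : Finset (Sym2 V)} {v : V} :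
    v ∈ vertSet A ↔ ∃ e ∈ A, v ∈ e := by simp [vertSet]

/-- decompose a non-diagonal edge at a vertex -/
lemma nondiag_decomp {A : Finset (Sym2 V)}
    (hnd : ∀ e ∈ A, ¬ e.IsDiag) {e : Sym2 V} (he : e ∈ A) {w : V} (hw : w ∈ e) :
    ∃ u, u ≠ w ∧ e = s(w, u) := by
  obtain ⟨u, rfl⟩ := Sym2.mem_iff_exists.mp hw
  refine ⟨u, fun hc => ?_, rfl⟩
  exact hnd _ he (by simp [hc])

/-- a nontrivial walk has an edge at its start -/
lemma exists_edge_at_start {H : SimpleGraph V} {x y : V} (r : H.Walk x y) (hxy : x ≠ y) :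
    ∃ e ∈ r.edges, x ∈ e := by
  cases r with
  | nil => exact absurd rfl hxy
  | cons hadj r' =>
    exact ⟨_, by rw [Walk.edges_cons]; exact List.mem_cons_self, Sym2.mem_mk_left _ _⟩

/-- a cycle has two distinct edges at its base vertex -/
lemma cycle_two_edges_at_base {H : SimpleGraph V} {v : V} {c : H.Walk v v} (hc : c.IsCycle) :
    ∃ e1 ∈ c.edges, ∃ e2 ∈ c.edges, e1 ≠ e2 ∧ v ∈ e1 ∧ v ∈ e2 := by
  cases c with
  | nil => exact absurd hc Walk.IsCycle.not_of_nil
  | cons hadj q =>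
    rename_i b
    have hkey := (Walk.cons_isCycle_iff q hadj).mp hc
    have hbv : b ≠ v := by
      rintro rfl; exact hadj.ne rfl
    obtain ⟨e2, he2r, hve2⟩ := exists_edge_at_start q.reverse (Ne.symm hbv)
    have he2 : e2 ∈ q.edges := by
      rw [Walk.edges_reverse, List.mem_reverse] at he2r; exact he2r
    refine ⟨s(v, b), ?_, e2, ?_, ?_, Sym2.mem_mk_left _ _, hve2⟩
    · rw [Walk.edges_cons]; exact List.mem_cons_self
    · rw [Walk.edges_cons]; exact List.mem_cons_of_mem _ he2
    · intro hcon; rw [← hcon] at he2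
      exact hkey.2 he2

section Extract

variable {H : SimpleGraph V} {A : Finset (Sym2 V)}

/-- everything along a walk stays put -/
lemma walk_in_component
    (hclosed : ∀ v, v ∈ vertSet A → ∀ x, H.Adj v x → s(v, x) ∈ A) :
    ∀ {x y : V} (q : H.Walk x y), x ∈ vertSet A →
      (∀ v ∈ q.support, v ∈ vertSet A) ∧ (∀ e ∈ q.edges, e ∈ A) := by
  intro x y q
  induction q with
  | nil =>
    intro hx
    refine ⟨fun v hv => ?_, fun e he => by simp at he⟩
    simp only [Walk.support_nil, List.mem_singleton] at hv
    subst hv; exact hx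
  | cons hadj r ih =>
    rename_i a b c
    intro hx
    have hedge : s(a, b) ∈ A := hclosed a hx b hadj
    have hb : b ∈ vertSet A := mem_vertSet.mpr ⟨_, hedge, Sym2.mem_mk_right _ _⟩
    obtain ⟨ihs, ihe⟩ := ih hb
    constructor
    · intro v hv
      rw [Walk.support_cons, List.mem_cons] at hv
      rcases hv with rfl | hv
      · exact hx
      · exact ihs v hv
    · intro e he
      rw [Walk.edges_cons, List.mem_cons] at he
      rcases he with rfl | he
      · exact hedge
      · exact ihe e he

/-- THE EXTRACTION: a 2-regular, closed, connected nonempty edge set is covered by a cycle. -/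
lemma exists_covering_cycle
    (hnd : ∀ e ∈ A, ¬ e.IsDiag)
    (hAH : ∀ e ∈ A, e ∈ H.edgeSet)
    (hclosed : ∀ v, v ∈ vertSet A → ∀ x, H.Adj v x → s(v, x) ∈ A)
    (hdeg2 : ∀ v ∈ vertSet A, edgeDeg A v = 2)
    (hconn : ∀ v ∈ vertSet A, ∀ w ∈ vertSet A, H.Reachable v w)
    (hAne : A.Nonempty) :
    ∃ (w : V) (c : H.Walk w w), c.IsCycle ∧ c.edges.toFinset = A := by
  classical
  obtain ⟨e₀, he₀⟩ := hAne
  obtain ⟨a₀, ha₀e⟩ : ∃ a, a ∈ e₀ := by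
    induction e₀ using Sym2.ind with
    | _ x y => exact ⟨x, Sym2.mem_mk_left x y⟩
  have ha₀ : a₀ ∈ vertSet A := mem_vertSet.mpr ⟨e₀, he₀, ha₀e⟩
  -- longest path from a₀
  set Q : ℕ → Prop := fun n => ∃ w, ∃ p : H.Walk a₀ w, p.IsPath ∧ p.length = n with hQ
  have hQ0 : Q 0 := ⟨a₀, Walk.nil, Walk.IsPath.nil, rfl⟩
  have hbd : ∀ n, Q n → n ≤ Fintype.card V := by
    rintro n ⟨w, p, hp, rfl⟩
    exact le_of_lt hp.length_lt
  obtain ⟨w, p, hp, hplen⟩ : Q (Nat.findGreatest Q (Fintype.card V)) :=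
    Nat.findGreatest_spec (Nat.zero_le _) hQ0
  have hmax : ∀ m, Nat.findGreatest Q (Fintype.card V) < m → m ≤ Fintype.card V → ¬ Q m :=
    fun m h1 h2 => Nat.findGreatest_is_greatest h1 h2
  -- all of p is inside the component
  obtain ⟨hpsup, hpedge⟩ := walk_in_component hclosed p ha₀
  have hw : w ∈ vertSet A := hpsup w p.end_mem_support
  -- the two edges at w
  obtain ⟨x, y, hxy, hpair⟩ := Finset.card_eq_two.mp (hdeg2 w hw)
  have hxmem : x ∈ A ∧ w ∈ x := by
    have : x ∈ A.filter (fun e => w ∈ e) := by rw [hpair]; simp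
    simpa using this
  have hymem : y ∈ A ∧ w ∈ y := by
    have : y ∈ A.filter (fun e => w ∈ e) := by rw [hpair]; simp
    simpa using this
  obtain ⟨u1, hu1w, hxe⟩ := nondiag_decomp hnd hxmem.1 hxmem.2
  obtain ⟨u2, hu2w, hye⟩ := nondiag_decomp hnd hymem.1 hymem.2
  have hadj1 : H.Adj w u1 := (H.mem_edgeSet).mp (hxe ▸ hAH x hxmem.1)
  have hadj2 : H.Adj w u2 := (H.mem_edgeSet).mp (hye ▸ hAH y hymem.1)
  -- both neighbours lie on p, else we could extend
  have hext : ∀ u, H.Adj w u → u ∈ p.support := by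
    intro u hadj
    by_contra hnsup
    have hpath : (p.concat hadj).IsPath := by
      rw [Walk.isPath_def, Walk.support_concat]
      rw [List.nodup_append]
      exact ⟨hp.2, List.nodup_singleton _, by
        intro z hz z' hz' hzz
        simp at hz'
        subst hz' hzz
        exact hnsup hz⟩
    have hQn : Q (p.length + 1) := ⟨u, p.concat hadj, hpath, by rw [Walk.length_concat]⟩
    have hle : p.length + 1 ≤ Fintype.card V := hbd _ hQn
    exact hmax (p.length + 1) (by rw [hplen]; exact Nat.lt_succ_self _) hle hQn
  have hu1sup : u1 ∈ p.support := hext u1 hadj1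
  have hu2sup : u2 ∈ p.support := hext u2 hadj2
  -- one of the two edges is not on p
  have hnotboth : s(w, u1) ∉ p.edges ∨ s(w, u2) ∉ p.edges := by
    by_contra hcon
    push_neg at hcon
    have := path_end_edge_unique hp _ hcon.1 _ hcon.2 (Sym2.mem_mk_left _ _) (Sym2.mem_mk_left _ _)
    exact hxy (hxe.trans (this.trans hye.symm))
  obtain ⟨u, hadj, husup, hnew, heA⟩ :
      ∃ u, H.Adj w u ∧ u ∈ p.support ∧ s(w, u) ∉ p.edges ∧ s(w, u) ∈ A := by
    rcases hnotboth with hn | hn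
    · exact ⟨u1, hadj1, hu1sup, hn, hxe ▸ hxmem.1⟩
    · exact ⟨u2, hadj2, hu2sup, hn, hye ▸ hymem.1⟩
  -- build the cycle
  set q : H.Walk u w := p.dropUntil u husup with hq
  have hqpath : q.IsPath := hp.dropUntil husup
  have hqedges : ∀ e ∈ q.edges, e ∈ p.edges := fun e he => Walk.edges_dropUntil_subset _ _ he
  set c : H.Walk w w := Walk.cons hadj q with hcdef
  have hcyc : c.IsCycle := by
    rw [hcdef, Walk.cons_isCycle_iff]
    exact ⟨hqpath, fun hcon => hnew (hqedges _ hcon)⟩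
  have hcedges : ∀ e ∈ c.edges, e ∈ A := by
    intro e he
    rw [hcdef, Walk.edges_cons, List.mem_cons] at he
    rcases he with rfl | he
    · exact heA
    · exact hpedge e (hqedges e he)
  -- every A-edge at a cycle vertex is a cycle edge
  have htwo : ∀ v ∈ c.support, ∀ e ∈ A, v ∈ e → e ∈ c.edges := by
    intro v hv e heAmem hve
    have hcyc' : (c.rotate _ hv).IsCycle := (Walk.isCycle_rotate hv).mpr hcyc
    obtain ⟨e1, he1, e2, he2, hne, hv1, hv2⟩ := cycle_two_edges_at_base hcyc'
    have hrot : ∀ e', e' ∈ (c.rotate _ hv).edges ↔ e' ∈ c.edges :=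
      fun e' => (Walk.rotate_edges c _ hv).mem_iff
    rw [hrot] at he1 he2
    have hsub : ({e1, e2} : Finset (Sym2 V)) ⊆ A.filter (fun e => v ∈ e) := by
      intro z hz
      simp only [Finset.mem_insert, Finset.mem_singleton] at hz
      rcases hz with rfl | rfl
      · exact Finset.mem_filter.mpr ⟨hcedges _ he1, hv1⟩
      · exact Finset.mem_filter.mpr ⟨hcedges _ he2, hv2⟩
    have hvA : v ∈ vertSet A := mem_vertSet.mpr ⟨_, hcedges _ he1, hv1⟩
    have hcard : (A.filter (fun e => v ∈ e)).card ≤ ({e1, e2} : Finset (Sym2 V)).card := by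
      have hd := hdeg2 v hvA
      rw [edgeDeg] at hd
      rw [hd, Finset.card_insert_of_notMem (by simpa using hne), Finset.card_singleton]
    have hpaireq := Finset.eq_of_subset_of_card_le hsub hcard
    have : e ∈ ({e1, e2} : Finset (Sym2 V)) := by
      rw [hpaireq]
      exact Finset.mem_filter.mpr ⟨heAmem, hve⟩
    simp only [Finset.mem_insert, Finset.mem_singleton] at this
    rcases this with rfl | rfl
    · exact he1
    · exact he2
  -- support is closed under reachability
  have hsupclosed : ∀ x y (r : H.Walk x y), x ∈ c.support → y ∈ c.support := by
    intro x y r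
    induction r with
    | nil => exact id
    | cons hadj' r' ih =>
      rename_i a b cc
      intro hx
      have hxA : a ∈ vertSet A := by
        obtain ⟨e1, he1, _, _, _, hv1, _⟩ := cycle_two_edges_at_base (Walk.IsCycle.rotate hx hcyc)
        have : e1 ∈ c.edges := (Walk.rotate_edges c _ hx).mem_iff.mp he1
        exact mem_vertSet.mpr ⟨e1, hcedges _ this, hv1⟩
      have hedge : s(a, b) ∈ A := hclosed a hxA b hadj'
      have hec : s(a, b) ∈ c.edges := htwo a hx _ hedge (Sym2.mem_mk_left _ _)
      exact ih (c.snd_mem_support_of_mem_edges hec)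
  refine ⟨w, c, hcyc, ?_⟩
  ext e
  simp only [List.mem_toFinset]
  constructor
  · exact hcedges e
  · intro heAmem
    obtain ⟨a, hae⟩ : ∃ a, a ∈ e := by
      induction e using Sym2.ind with
      | _ s t => exact ⟨s, Sym2.mem_mk_left s t⟩
    have haA : a ∈ vertSet A := mem_vertSet.mpr ⟨e, heAmem, hae⟩
    obtain ⟨r⟩ := hconn w hw a haA
    exact htwo a (hsupclosed w a r c.start_mem_support) e heAmem hae

end Extract

/-- the alternating weighting on an even cycle -/
lemma sigma_of_even_cycle {H : SimpleGraph V} {w : V} {c : H.Walk w w} (hc : c.IsCycle)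
    (heven : Even c.length) :
    ∃ σ : V → ℝ, (∀ a b : V, s(a, b) ∈ c.edges → σ a + σ b = 0) ∧ σ w = 1 := by
  classical
  set σ : V → ℝ := fun v => if v ∈ c.support then (-1 : ℝ) ^ (c.support.idxOf v) else 0
    with hσ
  have hlen : c.support.length = c.length + 1 := Walk.length_support c
  have hσw : σ w = 1 := by
    have hmem : w ∈ c.support := c.start_mem_support
    have hidx : c.support.idxOf w = 0 := by
      rw [Walk.support_eq_cons]
      exact List.idxOf_cons_self
    simp [hσ, hmem, hidx]
  refine ⟨σ, ?_, hσw⟩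
  have key : ∀ (i : ℕ) (h2 : i + 1 < c.support.length),
      σ (c.support[i]'(by omega)) + σ (c.support[i+1]'h2) = 0 := by
    intro i h2
    have hmi : c.support[i]'(by omega) ∈ c.support := List.getElem_mem _
    have hmi1 : c.support[i+1]'h2 ∈ c.support := List.getElem_mem _
    have hvi : σ (c.support[i]'(by omega)) = (-1 : ℝ) ^ i := by
      rw [hσ]; simp only [hmi, if_pos]
      rw [cycle_indexOf hc h2]
    have hvi1 : σ (c.support[i+1]'h2) = (-1 : ℝ) ^ (i + 1) := by
      by_cases hlast : i + 2 < c.support.length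
      · rw [hσ]; simp only [hmi1, if_pos]
        rw [cycle_indexOf hc hlast]
      · -- i+1 is the last index, so the vertex is w
        have hieq : i + 1 = c.length := by omega
        have hgetlast : c.support[i+1]'h2 = w := by
          have h3 : c.support[i+1]'h2 = c.support.getLast (by
            rw [Walk.support_eq_cons]; simp) := by
            rw [List.getLast_eq_getElem]
            congr 1
            omega
          rw [h3, Walk.getLast_support]
        rw [hgetlast, hσw]
        rw [hieq]
        rcases heven with ⟨k, hk⟩
        rw [hk]
        rw [show k + k = 2 * k by ring]
        rw [pow_mul]
        norm_num
    rw [hvi, hvi1, pow_succ]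
    ring
  intro a b hab
  obtain ⟨i, h2, heq⟩ := walk_edge_eq c _ hab
  have := key i h2
  rw [Sym2.eq_iff] at heq
  rcases heq with ⟨ha, hb⟩ | ⟨ha, hb⟩
  · rw [← ha, ← hb] at this; exact this
  · rw [← ha, ← hb] at this; linarith

/-- handshake: sum of degrees is twice the number of edges -/
lemma handshake {A : Finset (Sym2 V)} (hnd : ∀ e ∈ A, ¬ e.IsDiag) :
    ∑ v ∈ vertSet A, edgeDeg A v = 2 * A.card := by
  classical
  unfold edgeDeg
  have hswap : ∑ v ∈ vertSet A, (A.filter (fun e => v ∈ e)).card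
      = ∑ v ∈ vertSet A, ∑ e ∈ A, (if v ∈ e then 1 else 0) := by
    refine Finset.sum_congr rfl fun v _ => ?_
    rw [Finset.card_filter]
  rw [hswap, Finset.sum_comm]
  rw [show 2 * A.card = ∑ _e ∈ A, 2 from by rw [Finset.sum_const, smul_eq_mul]; ring]
  refine Finset.sum_congr rfl fun e he => ?_
  -- each nondiagonal edge has exactly 2 vertices in vertSet A
  obtain ⟨a, b, hab⟩ : ∃ a b : V, e = s(a, b) ∧ a ≠ b := by
    induction e using Sym2.ind with
    | _ x y =>
      refine ⟨x, y, rfl, ?_⟩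
      intro hcon
      exact hnd _ he (by simp [hcon])
  obtain ⟨heq, hne⟩ := hab
  subst heq
  have haS : a ∈ vertSet A := by simp [vertSet]; exact ⟨_, he, Sym2.mem_mk_left _ _⟩
  have hbS : b ∈ vertSet A := by simp [vertSet]; exact ⟨_, he, Sym2.mem_mk_right _ _⟩
  rw [← Finset.card_filter]
  have : (vertSet A).filter (fun v => v ∈ s(a,b)) = {a, b} := by
    ext v
    simp only [Finset.mem_filter, Finset.mem_insert, Finset.mem_singleton, Sym2.mem_iff]
    constructor
    · rintro ⟨_, h⟩; exact h
    · rintro (rfl | rfl)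
      · exact ⟨haS, Or.inl rfl⟩
      · exact ⟨hbS, Or.inr rfl⟩
  rw [this]
  rw [Finset.card_insert_of_notMem (by simpa using hne)]
  simp

/-- every fractional perfect matching `f` has an equivalent fractional
perfect matching `f'` with `E(f') ⊆ E(f)` such that every connected component of
`G(E(f'))` (ignoring isolated vertices) is a single edge or an odd cycle. -/
theorem exists_equiv_single_edges_and_odd_cycles (G : SimpleGraph V)
    (hG : ∀ v : V, ∃ u, G.Adj u v) (f : Sym2 V → ℝ) (hf : IsFPM G f) :
    ∃ f' : Sym2 V → ℝ, IsFPM G f' ∧ fSupp f' ⊆ fSupp f ∧ Equiv' f f' ∧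
      EdgesAndOddCycles (fSupp f') := by
  classical
  obtain ⟨h, hh, hsub, hequiv, hker⟩ := exists_minimal hf
  refine ⟨h, hh, hsub, hequiv, ?_⟩
  set F := fSupp h with hF
  have hFG : ∀ e ∈ F, e ∈ G.edgeSet := by
    intro e he
    by_contra hc
    have := hh.2.1 e hc
    have := mem_fSupp.mp he
    linarith
  have hFnd : ∀ e ∈ F, ¬ e.IsDiag := fun e he =>
    G.not_isDiag_of_mem_edgeSet (hFG e he)
  have hzero : ∀ e ∉ F, h e = 0 := by
    intro e he
    have h1 := mem_fSupp.not.mp he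
    push_neg at h1
    linarith [(hh.1 e).1]
  -- degree-one analysis
  have hdeg1 : ∀ v, edgeDeg F v = 1 → ∃ e, F.filter (fun e' => v ∈ e') = {e} ∧ h e = 1 := by
    intro v hv
    obtain ⟨e, hefilt⟩ := Finset.card_eq_one.mp hv
    refine ⟨e, hefilt, ?_⟩
    have := hh.2.2 v
    rwa [fracDeg_eq_sum_filter hzero v, hefilt, Finset.sum_singleton] at this
  set F1 : Finset (Sym2 V) := F.filter (fun e => ∃ v ∈ e, edgeDeg F v = 1) with hF1
  set F2 : Finset (Sym2 V) := F \ F1 with hF2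
  have hF2sub : F2 ⊆ F := Finset.sdiff_subset
  have hF1sub : F1 ⊆ F := Finset.filter_subset _ _
  have KEY1 : ∀ e ∈ F1, ∀ v ∈ e, F.filter (fun e' => v ∈ e') = {e} := by
    intro e he v hve
    have hem := Finset.mem_filter.mp he
    have heF : e ∈ F := hem.1
    obtain ⟨v₀, hv₀e, hdeg⟩ := hem.2
    obtain ⟨e', hfilt, he'1⟩ := hdeg1 v₀ hdeg
    have : e ∈ F.filter (fun e' => v₀ ∈ e') := Finset.mem_filter.mpr ⟨heF, hv₀e⟩
    rw [hfilt, Finset.mem_singleton] at this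
    subst this
    have he1 : h e = 1 := he'1
    ext e''
    simp only [Finset.mem_filter, Finset.mem_singleton]
    constructor
    · rintro ⟨he''F, hve''⟩
      by_contra hne
      have := weight_one_isolates hh he1 hve e'' hne hve''
      have := mem_fSupp.mp he''F
      linarith
    · rintro rfl; exact ⟨heF, hve⟩
  have KEY2 : ∀ v, (∃ e ∈ F2, v ∈ e) →
      F.filter (fun e' => v ∈ e') = F2.filter (fun e' => v ∈ e') ∧ 2 ≤ edgeDeg F2 v := by
    intro v ⟨e, heF2, hve⟩
    have heF : e ∈ F := hF2sub heF2
    have heq : F.filter (fun e' => v ∈ e') = F2.filter (fun e' => v ∈ e') := by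
      ext e''
      simp only [Finset.mem_filter]
      constructor
      · rintro ⟨he''F, hve''⟩
        refine ⟨?_, hve''⟩
        rw [hF2, Finset.mem_sdiff]
        refine ⟨he''F, fun he''F1 => ?_⟩
        have := KEY1 e'' he''F1 v hve''
        have heme : e ∈ F.filter (fun e' => v ∈ e') := Finset.mem_filter.mpr ⟨heF, hve⟩
        rw [this, Finset.mem_singleton] at heme
        subst heme
        rw [hF2, Finset.mem_sdiff] at heF2
        exact heF2.2 he''F1
      · rintro ⟨he''F2, hve''⟩
        exact ⟨hF2sub he''F2, hve''⟩
    refine ⟨heq, ?_⟩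
    have hne1 : edgeDeg F v ≠ 1 := by
      intro hcon
      have : e ∈ F1 := by
        rw [hF1, Finset.mem_filter]
        exact ⟨heF, v, hve, hcon⟩
      rw [hF2, Finset.mem_sdiff] at heF2
      exact heF2.2 this
    have hge1 : 1 ≤ edgeDeg F v := by
      have : 0 < (F.filter (fun e' => v ∈ e')).card :=
        Finset.card_pos.mpr ⟨e, Finset.mem_filter.mpr ⟨heF, hve⟩⟩
      exact this
    have : edgeDeg F2 v = edgeDeg F v := by rw [edgeDeg, edgeDeg, heq]
    omega
  -- the component graph
  set H : SimpleGraph V := SimpleGraph.fromEdgeSet (↑F2 : Set (Sym2 V)) with hH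
  have hedge_adj : ∀ e ∈ F2, ∀ a b : V, e = s(a, b) → a ≠ b → H.Adj a b := by
    intro e he a b heq hne
    rw [hH, SimpleGraph.fromEdgeSet_adj]
    exact ⟨by rw [← heq]; exact_mod_cast he, hne⟩
  have hinner : ∀ e ∈ F2, ∀ a ∈ e, ∀ b ∈ e, H.Reachable a b := by
    intro e he a ha b hb
    induction e using Sym2.ind with
    | _ x y =>
      have hxy : x ≠ y := by
        intro hcon
        exact hFnd _ (hF2sub he) (by simp [hcon])
      rw [Sym2.mem_iff] at ha hb
      have hadj : H.Adj x y := hedge_adj _ he x y rfl hxy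
      rcases ha with rfl | rfl <;> rcases hb with rfl | rfl
      · exact SimpleGraph.Reachable.refl _
      · exact hadj.reachable
      · exact hadj.symm.reachable
      · exact SimpleGraph.Reachable.refl _
  set comp : Sym2 V → Finset (Sym2 V) :=
    fun e => F2.filter (fun e' => ∃ a b, a ∈ e ∧ b ∈ e' ∧ H.Reachable a b) with hcomp
  have hself : ∀ e ∈ F2, e ∈ comp e := by
    intro e he
    rw [hcomp, Finset.mem_filter]
    obtain ⟨a, ha⟩ : ∃ a, a ∈ e := by
      induction e using Sym2.ind with
      | _ x y => exact ⟨x, Sym2.mem_mk_left x y⟩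
    exact ⟨he, a, a, ha, ha, SimpleGraph.Reachable.refl _⟩
  have hreach : ∀ e ∈ F2, ∀ e1 ∈ comp e, ∀ v1 ∈ e1, ∀ a ∈ e, H.Reachable a v1 := by
    intro e he e1 he1 v1 hv1 a ha
    rw [hcomp, Finset.mem_filter] at he1
    obtain ⟨he1F2, a', b', ha', hb', hr⟩ := he1
    exact ((hinner e he a ha a' ha').trans hr).trans (hinner e1 he1F2 b' hb' v1 hv1)
  have hcl : ∀ e ∈ F2, ∀ v, v ∈ vertSet (comp e) → ∀ e'' ∈ F2, v ∈ e'' → e'' ∈ comp e := by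
    intro e he v hv e'' he'' hve''
    obtain ⟨e1, he1, hve1⟩ := mem_vertSet.mp hv
    obtain ⟨a, ha⟩ : ∃ a, a ∈ e := by
      induction e using Sym2.ind with
      | _ x y => exact ⟨x, Sym2.mem_mk_left x y⟩
    rw [hcomp, Finset.mem_filter]
    exact ⟨he'', a, v, ha, hve'', hreach e he e1 he1 v hve1 a ha⟩
  have hcomp_eq : ∀ e ∈ F2, ∀ e' ∈ F2, ∀ v, v ∈ vertSet (comp e) → v ∈ vertSet (comp e') →
      comp e = comp e' := by
    have haux : ∀ e ∈ F2, ∀ e' ∈ F2, ∀ v, v ∈ vertSet (comp e) → v ∈ vertSet (comp e') →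
        comp e ⊆ comp e' := by
      intro e he e' he' v hv hv' e'' he''
      obtain ⟨b'', hb''⟩ : ∃ b, b ∈ e'' := by
        induction e'' using Sym2.ind with
        | _ x y => exact ⟨x, Sym2.mem_mk_left x y⟩
      obtain ⟨a', ha'⟩ : ∃ a, a ∈ e' := by
        induction e' using Sym2.ind with
        | _ x y => exact ⟨x, Sym2.mem_mk_left x y⟩
      obtain ⟨a, ha⟩ : ∃ a, a ∈ e := by
        induction e using Sym2.ind with
        | _ x y => exact ⟨x, Sym2.mem_mk_left x y⟩
      obtain ⟨e1, he1, hve1⟩ := mem_vertSet.mp hv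
      have hr1 : H.Reachable a v := hreach e he e1 he1 v hve1 a ha
      have hr2 : H.Reachable a b'' := hreach e he e'' he'' b'' hb'' a ha
      obtain ⟨e1', he1', hve1'⟩ := mem_vertSet.mp hv'
      have hr3 : H.Reachable a' v := hreach e' he' e1' he1' v hve1' a' ha'
      have he''F2 : e'' ∈ F2 := (Finset.mem_filter.mp he'').1
      rw [hcomp, Finset.mem_filter]
      exact ⟨he''F2, a', b'', ha', hb'', (hr3.trans hr1.symm).trans hr2⟩
    intro e he e' he' v hv hv'
    exact Finset.Subset.antisymm (haux e he e' he' v hv hv') (haux e' he' e he v hv' hv)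
  -- per-component odd cycle
  have hodd : ∀ e₀ ∈ F2, IsOddCycleSet (comp e₀) := by
    intro e₀ he₀
    set A := comp e₀ with hA
    have hAsub : A ⊆ F2 := Finset.filter_subset _ _
    have hAnd : ∀ e ∈ A, ¬ e.IsDiag := fun e he => hFnd e (hF2sub (hAsub he))
    have hAH : ∀ e ∈ A, e ∈ H.edgeSet := by
      intro e he
      rw [hH, SimpleGraph.edgeSet_fromEdgeSet]
      exact ⟨by exact_mod_cast hAsub he, hAnd e he⟩
    have hclosed : ∀ v, v ∈ vertSet A → ∀ x, H.Adj v x → s(v, x) ∈ A := by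
      intro v hv x hadj
      have : s(v, x) ∈ F2 := by
        rw [hH, SimpleGraph.fromEdgeSet_adj] at hadj
        exact_mod_cast hadj.1
      exact hcl e₀ he₀ v hv _ this (Sym2.mem_mk_left _ _)
    have hfilt : ∀ v ∈ vertSet A, A.filter (fun e => v ∈ e) = F2.filter (fun e => v ∈ e) := by
      intro v hv
      ext e''
      simp only [Finset.mem_filter]
      constructor
      · rintro ⟨h1, h2⟩; exact ⟨hAsub h1, h2⟩
      · rintro ⟨h1, h2⟩; exact ⟨hcl e₀ he₀ v hv e'' h1 h2, h2⟩
    have hdegge2 : ∀ v ∈ vertSet A, 2 ≤ edgeDeg A v := by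
      intro v hv
      obtain ⟨e1, he1, hve1⟩ := mem_vertSet.mp hv
      have h2 := (KEY2 v ⟨e1, hAsub he1, hve1⟩).2
      have : edgeDeg A v = edgeDeg F2 v := by rw [edgeDeg, edgeDeg, hfilt v hv]
      omega
    have hkerA : ∀ g : Sym2 V → ℝ, (∀ e ∉ A, g e = 0) → (∀ v, fracDeg g v = 0) → g = 0 := by
      intro g hg0 hgd
      refine hker g (fun e he => hg0 e fun heA => he ?_) hgd
      exact hF2sub (hAsub heA)
    have hcardle : A.card ≤ (vertSet A).card := card_le_of_ker hkerA
    have hcardge : (vertSet A).card ≤ A.card := by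
      have h1 : ∑ v ∈ vertSet A, 2 ≤ ∑ v ∈ vertSet A, edgeDeg A v :=
        Finset.sum_le_sum hdegge2
      rw [handshake hAnd, Finset.sum_const, smul_eq_mul] at h1
      omega
    have hcardeq : A.card = (vertSet A).card := le_antisymm hcardle hcardge
    have hdeg2 : ∀ v ∈ vertSet A, edgeDeg A v = 2 := by
      have hsum : ∑ v ∈ vertSet A, (2 : ℕ) = ∑ v ∈ vertSet A, edgeDeg A v := by
        rw [handshake hAnd, Finset.sum_const, smul_eq_mul]
        omega
      have := (Finset.sum_eq_sum_iff_of_le hdegge2).mp hsum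
      exact fun v hv => ((this v hv).symm)
    have hconn : ∀ v ∈ vertSet A, ∀ w ∈ vertSet A, H.Reachable v w := by
      intro v hv w hw
      obtain ⟨a, ha⟩ : ∃ a, a ∈ e₀ := by
        induction e₀ using Sym2.ind with
        | _ x y => exact ⟨x, Sym2.mem_mk_left x y⟩
      obtain ⟨e1, he1, hve1⟩ := mem_vertSet.mp hv
      obtain ⟨e2, he2, hwe2⟩ := mem_vertSet.mp hw
      exact (hreach e₀ he₀ e1 he1 v hve1 a ha).symm.trans (hreach e₀ he₀ e2 he2 w hwe2 a ha)
    obtain ⟨w, c, hcyc, hEd⟩ := exists_covering_cycle hAnd hAH hclosed hdeg2 hconn ⟨e₀, hself e₀ he₀⟩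
    have hcE : ∀ e ∈ c.edges, e ∈ A := by
      intro e he
      rw [← hEd]
      exact List.mem_toFinset.mpr he
    have hwA : w ∈ vertSet A := by
      obtain ⟨e1, he1, _, _, _, hv1, _⟩ := cycle_two_edges_at_base hcyc
      exact mem_vertSet.mpr ⟨e1, hcE _ he1, hv1⟩
    have hodd_len : Odd c.length := by
      by_contra hcon
      rw [Nat.not_odd_iff_even] at hcon
      obtain ⟨σ, hσ, hσw⟩ := sigma_of_even_cycle hcyc hcon
      have hσe : ∀ e ∈ A, ∑ v ∈ (vertSet A).filter (· ∈ e), σ v = 0 := by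
        intro e he
        obtain ⟨a, b, heq, hne⟩ : ∃ a b : V, e = s(a, b) ∧ a ≠ b := by
          induction e using Sym2.ind with
          | _ x y =>
            refine ⟨x, y, rfl, fun hcon' => ?_⟩
            exact hAnd _ he (by simp [hcon'])
        subst heq
        have haS : a ∈ vertSet A := mem_vertSet.mpr ⟨_, he, Sym2.mem_mk_left _ _⟩
        have hbS : b ∈ vertSet A := mem_vertSet.mpr ⟨_, he, Sym2.mem_mk_right _ _⟩
        have hfilteq : (vertSet A).filter (· ∈ s(a,b)) = {a, b} := by
          ext v
          simp only [Finset.mem_filter, Finset.mem_insert, Finset.mem_singleton, Sym2.mem_iff]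
          constructor
          · rintro ⟨_, hv⟩; exact hv
          · rintro (rfl | rfl)
            · exact ⟨haS, Or.inl rfl⟩
            · exact ⟨hbS, Or.inr rfl⟩
        rw [hfilteq, Finset.sum_insert (by simpa using hne), Finset.sum_singleton]
        refine hσ a b ?_
        rw [← hEd] at he
        exact List.mem_toFinset.mp he
      have := card_lt_of_ker_of_sigma hkerA σ hσe ⟨w, hwA, by rw [hσw]; norm_num⟩
      omega
    have hce : ∀ e ∈ c.edges, e ∈ (SimpleGraph.fromEdgeSet (↑A : Set (Sym2 V))).edgeSet := by
      intro e he
      rw [SimpleGraph.edgeSet_fromEdgeSet]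
      exact ⟨by exact_mod_cast hcE e he, hAnd e (hcE e he)⟩
    refine ⟨w, c.transfer _ hce, hcyc.transfer hce, ?_, ?_⟩
    · rw [SimpleGraph.Walk.length_transfer]
      exact hodd_len
    · rw [SimpleGraph.Walk.edges_transfer]
      exact hEd
  -- assemble the partition
  refine ⟨F1.image (fun e => ({e} : Finset (Sym2 V))) ∪ F2.image comp, ?_, ?_, ?_⟩
  · intro B hB
    rw [Finset.mem_union] at hB
    rcases hB with hB | hB
    · obtain ⟨e, _, rfl⟩ := Finset.mem_image.mp hB
      exact Or.inl ⟨e, rfl⟩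
    · obtain ⟨e, he, rfl⟩ := Finset.mem_image.mp hB
      exact Or.inr (hodd e he)
  · intro B hB B' hB' hne v h1 h2
    obtain ⟨e, heB, hve⟩ := h1
    obtain ⟨e', heB', hve'⟩ := h2
    rw [Finset.mem_union] at hB hB'
    have hmemF1 : ∀ z : Sym2 V, z ∈ F1 → ∀ y ∈ F, v ∈ z → v ∈ y → y = z := by
      intro z hz y hy hvz hvy
      have := KEY1 z hz v hvz
      have hmem : y ∈ F.filter (fun e' => v ∈ e') := Finset.mem_filter.mpr ⟨hy, hvy⟩
      rw [this, Finset.mem_singleton] at hmem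
      exact hmem
    rcases hB with hB | hB <;> rcases hB' with hB' | hB'
    · obtain ⟨e1, he1, rfl⟩ := Finset.mem_image.mp hB
      obtain ⟨e2, he2, rfl⟩ := Finset.mem_image.mp hB'
      rw [Finset.mem_singleton] at heB heB'
      subst heB; subst heB'
      have := hmemF1 e he1 e' (hF1sub he2) hve hve'
      exact hne (by rw [this])
    · obtain ⟨e1, he1, rfl⟩ := Finset.mem_image.mp hB
      obtain ⟨e2, he2, rfl⟩ := Finset.mem_image.mp hB'
      rw [Finset.mem_singleton] at heB
      subst heB
      have he'F2 : e' ∈ F2 := (Finset.mem_filter.mp heB').1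
      have := hmemF1 e he1 e' (hF2sub he'F2) hve hve'
      rw [hF2, Finset.mem_sdiff] at he'F2
      exact he'F2.2 (this ▸ he1)
    · obtain ⟨e1, he1, rfl⟩ := Finset.mem_image.mp hB
      obtain ⟨e2, he2, rfl⟩ := Finset.mem_image.mp hB'
      rw [Finset.mem_singleton] at heB'
      subst heB'
      have heF2 : e ∈ F2 := (Finset.mem_filter.mp heB).1
      have := hmemF1 e' he2 e (hF2sub heF2) hve' hve
      rw [hF2, Finset.mem_sdiff] at heF2
      exact heF2.2 (this ▸ he2)
    · obtain ⟨e1, he1, rfl⟩ := Finset.mem_image.mp hB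
      obtain ⟨e2, he2, rfl⟩ := Finset.mem_image.mp hB'
      have hv1 : v ∈ vertSet (comp e1) := mem_vertSet.mpr ⟨e, heB, hve⟩
      have hv2 : v ∈ vertSet (comp e2) := mem_vertSet.mpr ⟨e', heB', hve'⟩
      exact hne (hcomp_eq e1 he1 e2 he2 v hv1 hv2)
  · ext e
    rw [Finset.mem_biUnion]
    constructor
    · rintro ⟨B, hB, heB⟩
      rw [Finset.mem_union] at hB
      rcases hB with hB | hB
      · obtain ⟨e1, he1, rfl⟩ := Finset.mem_image.mp hB
        rw [id_eq, Finset.mem_singleton] at heB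
        subst heB
        exact hF1sub he1
      · obtain ⟨e1, he1, rfl⟩ := Finset.mem_image.mp hB
        rw [id_eq] at heB
        exact hF2sub ((Finset.mem_filter.mp heB).1)
    · intro heF
      by_cases he1 : e ∈ F1
      · exact ⟨{e}, Finset.mem_union_left _ (Finset.mem_image.mpr ⟨e, he1, rfl⟩),
          by rw [id_eq]; exact Finset.mem_singleton_self e⟩
      · have heF2 : e ∈ F2 := by rw [hF2, Finset.mem_sdiff]; exact ⟨heF, he1⟩
        exact ⟨comp e, Finset.mem_union_right _ (Finset.mem_image.mpr ⟨e, heF2, rfl⟩),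
          by rw [id_eq]; exact hself e heF2⟩
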